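/- arXiv:2310.04011 — 2 statements merged into one kernel-verified Lean document; each statement's English description precedes it below -/
import Mathlib

section
/- The derivative formula for B-splines: for p ≥ 1 and ξ in the interior of a knot span, d/dξ N_{i,p}(ξ) = (p/(ξ_{i+p} − ξ_i)) N_{i,p−1}(ξ) − (p/(ξ_{i+p+1} − ξ_{i+1})) N_{i+1,p−1}(ξ), with terms having zero denominator interpreted as zero. -/
/-- Cox–de Boor recursion, with the `0/0 = 0` convention. -/
noncomputable def coxDeBoor (ξ : ℕ → ℝ) : ℕ → ℕ → ℝ → ℝ
  | 0, i, x => if ξ i ≤ x ∧ x < ξ (i + 1) then 1 else 0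
  | p + 1, i, x =>
      (if ξ (i + p + 1) = ξ i then 0
        else (x - ξ i) / (ξ (i + p + 1) - ξ i) * coxDeBoor ξ p i x) +
      (if ξ (i + p + 2) = ξ (i + 1) then 0
        else (ξ (i + p + 2) - x) / (ξ (i + p + 2) - ξ (i + 1)) * coxDeBoor ξ p (i + 1) x)

private lemma coxDeBoor_zero_eventually (ξ : ℕ → ℝ) (hξ : Monotone ξ) (x : ℝ)
    (j : ℕ) (h1 : ξ j < x) (h2 : x < ξ (j+1)) (k : ℕ) :
    ∀ᶠ y in nhds x, coxDeBoor ξ 0 k y = coxDeBoor ξ 0 k x := by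
  have hout : ∀ k, ξ k ≤ ξ j ∨ ξ (j+1) ≤ ξ k := by
    intro k
    rcases le_or_gt k j with h | h
    · exact Or.inl (hξ h)
    · exact Or.inr (hξ h)
  filter_upwards [Ioo_mem_nhds h1 h2] with y hy
  obtain ⟨hy1, hy2⟩ := hy
  have e1 : (ξ k ≤ y) ↔ (ξ k ≤ x) := by
    rcases hout k with h | h
    · simp [h.trans h1.le, h.trans hy1.le]
    · constructor <;> intro h' <;> [exact absurd (h.trans h') (not_le.mpr hy2);
        exact absurd (h.trans h') (not_le.mpr h2)]
  have e2 : (y < ξ (k+1)) ↔ (x < ξ (k+1)) := by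
    rcases hout (k+1) with h | h
    · constructor <;> intro h' <;>
        [exact absurd (h'.trans_le h) (not_lt.mpr hy1.le);
         exact absurd (h'.trans_le h) (not_lt.mpr h1.le)]
    · simp [hy2.trans_le h, h2.trans_le h]
  simp only [coxDeBoor, e1, e2]

set_option maxHeartbeats 2000000 in
private lemma coxDeBoor_hasDerivAt_aux (ξ : ℕ → ℝ) (hξ : Monotone ξ) (x : ℝ)
    (j : ℕ) (hj1 : ξ j < x) (hj2 : x < ξ (j+1)) :
    ∀ p i, HasDerivAt (fun y => coxDeBoor ξ p i y)
      ((if ξ (i + p) = ξ i then 0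
          else (p : ℝ) / (ξ (i + p) - ξ i) * coxDeBoor ξ (p - 1) i x) -
        (if ξ (i + p + 1) = ξ (i + 1) then 0
          else (p : ℝ) / (ξ (i + p + 1) - ξ (i + 1)) * coxDeBoor ξ (p - 1) (i + 1) x)) x := by
  intro p
  induction p with
  | zero =>
      intro i
      simp only [Nat.add_zero, Nat.cast_zero, if_pos rfl, sub_zero]
      simpa using (hasDerivAt_const x (coxDeBoor ξ 0 i x)).congr_of_eventuallyEq
        (coxDeBoor_zero_eventually ξ hξ x j hj1 hj2 i)
  | succ p ih =>
      intro i
      -- derivative of the first summand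
      have hA : HasDerivAt (fun y => if ξ (i + p + 1) = ξ i then (0:ℝ)
            else (y - ξ i) / (ξ (i + p + 1) - ξ i) * coxDeBoor ξ p i y)
          (if ξ (i + p + 1) = ξ i then 0
            else 1 / (ξ (i + p + 1) - ξ i) * coxDeBoor ξ p i x
              + (x - ξ i) / (ξ (i + p + 1) - ξ i) *
                ((if ξ (i + p) = ξ i then 0
                    else (p : ℝ) / (ξ (i + p) - ξ i) * coxDeBoor ξ (p - 1) i x) -
                  (if ξ (i + p + 1) = ξ (i + 1) then 0
                    else (p : ℝ) / (ξ (i + p + 1) - ξ (i + 1)) * coxDeBoor ξ (p - 1) (i + 1) x))) x := by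
        by_cases hc1 : ξ (i + p + 1) = ξ i
        · simp only [hc1, if_pos rfl, if_true]
          simpa using hasDerivAt_const x (0:ℝ)
        · simp only [if_neg hc1]
          exact (((hasDerivAt_id x).sub_const (ξ i)).div_const (ξ (i + p + 1) - ξ i)).mul (ih i)
      have hB : HasDerivAt (fun y => if ξ (i + p + 2) = ξ (i + 1) then (0:ℝ)
            else (ξ (i + p + 2) - y) / (ξ (i + p + 2) - ξ (i + 1)) * coxDeBoor ξ p (i + 1) y)
          (if ξ (i + p + 2) = ξ (i + 1) then 0
            else (-1) / (ξ (i + p + 2) - ξ (i + 1)) * coxDeBoor ξ p (i + 1) x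
              + (ξ (i + p + 2) - x) / (ξ (i + p + 2) - ξ (i + 1)) *
                ((if ξ (i + 1 + p) = ξ (i + 1) then 0
                    else (p : ℝ) / (ξ (i + 1 + p) - ξ (i + 1)) * coxDeBoor ξ (p - 1) (i + 1) x) -
                  (if ξ (i + 1 + p + 1) = ξ (i + 1 + 1) then 0
                    else (p : ℝ) / (ξ (i + 1 + p + 1) - ξ (i + 1 + 1)) * coxDeBoor ξ (p - 1) (i + 1 + 1) x))) x := by
        by_cases hc2 : ξ (i + p + 2) = ξ (i + 1)
        · simp only [hc2, if_pos rfl, if_true]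
          simpa using hasDerivAt_const x (0:ℝ)
        · simp only [if_neg hc2]
          exact ((((hasDerivAt_const x (ξ (i + p + 2))).sub (hasDerivAt_id x)).div_const (ξ (i + p + 2) - ξ (i + 1))).mul (ih (i+1))).congr_deriv (by norm_num)
      have h := hA.add hB
      have hfun : (fun y => coxDeBoor ξ (p+1) i y) = fun y =>
          (if ξ (i + p + 1) = ξ i then (0:ℝ)
            else (y - ξ i) / (ξ (i + p + 1) - ξ i) * coxDeBoor ξ p i y) +
          (if ξ (i + p + 2) = ξ (i + 1) then (0:ℝ)
            else (ξ (i + p + 2) - y) / (ξ (i + p + 2) - ξ (i + 1)) * coxDeBoor ξ p (i + 1) y) := by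
        funext y; simp only [coxDeBoor]
      rw [hfun]
      refine h.congr_deriv ?_
      symm
      cases p with
      | zero =>
          norm_num
          simp only [show i+1+1 = i+2 from rfl]
          split_ifs <;> ring
      | succ q =>
          simp only [Nat.add_sub_cancel, coxDeBoor]
          simp only [(by omega : i+(q+1+1) = i+q+2), (by omega : i+1+q+1 = i+q+2),
            (by omega : i+1+q+2 = i+q+3), (by omega : i+1+1 = i+2),
            (by omega : i+(q+1)+1 = i+q+2), (by omega : i+(q+1) = i+q+1),
            (by omega : i+(q+1)+2 = i+q+3), (by omega : i+1+(q+1) = i+q+2),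
            (by omega : i+1+(q+1)+1 = i+q+3), (by omega : i+q+2+1 = i+q+3),
            (by omega : i+q+1+1 = i+q+2)]
          have hI1 : ξ (i+q+2) = ξ i → ξ (i+q+1) = ξ i := fun h =>
            le_antisymm (le_trans (hξ (by omega)) (le_of_eq h)) (hξ (by omega))
          have hI2 : ξ (i+q+2) = ξ i → ξ (i+q+2) = ξ (i+1) := fun h =>
            le_antisymm (le_trans (le_of_eq h) (hξ (by omega))) (hξ (by omega))
          have hI3 : ξ (i+q+3) = ξ (i+1) → ξ (i+q+2) = ξ (i+1) := fun h =>
            le_antisymm (le_trans (hξ (by omega)) (le_of_eq h)) (hξ (by omega))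
          have hI4 : ξ (i+q+3) = ξ (i+1) → ξ (i+q+3) = ξ (i+2) := fun h =>
            le_antisymm (le_trans (le_of_eq h) (hξ (by omega))) (hξ (by omega))
          push_cast
          by_cases hc1 : ξ (i+q+2) = ξ i
          · simp only [if_pos hc1, if_pos (hI1 hc1), if_pos (hI2 hc1)]
            by_cases hc2 : ξ (i+q+3) = ξ (i+1)
            · simp only [if_pos hc2, if_pos (hI4 hc2)]
              norm_num
            · simp only [if_neg hc2]
              split_ifs with hg3
              · norm_num
              · field_simp [sub_ne_zero.mpr hc2, sub_ne_zero.mpr hg3]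
                ring1
          · by_cases hc2 : ξ (i+q+3) = ξ (i+1)
            · simp only [if_neg hc1, if_pos hc2, if_pos (hI3 hc2), if_pos (hI4 hc2)]
              split_ifs with hg1
              · norm_num
              · field_simp [sub_ne_zero.mpr hc1, sub_ne_zero.mpr hg1]
                ring1
            · simp only [if_neg hc1, if_neg hc2]
              have e1 := sub_ne_zero.mpr hc1
              have e2 := sub_ne_zero.mpr hc2
              by_cases hg1 : ξ (i+q+1) = ξ i
              · by_cases hg2 : ξ (i+q+2) = ξ (i+1)
                · by_cases hg3 : ξ (i+q+3) = ξ (i+2)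
                  · simp only [if_pos hg1, if_pos hg2, if_pos hg3]
                    first
                      | (field_simp [e1, e2]; ring1)
                      | norm_num
                      | ring1
                  · simp only [if_pos hg1, if_pos hg2, if_neg hg3]
                    first
                      | (field_simp [e1, e2, sub_ne_zero.mpr hg3]; ring1)
                      | norm_num
                      | ring1
                · by_cases hg3 : ξ (i+q+3) = ξ (i+2)
                  · simp only [if_pos hg1, if_neg hg2, if_pos hg3]
                    first
                      | (field_simp [e1, e2, sub_ne_zero.mpr hg2]; ring1)
                      | norm_num
                      | ring1
                  · simp only [if_pos hg1, if_neg hg2, if_neg hg3]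
                    first
                      | (field_simp [e1, e2, sub_ne_zero.mpr hg2, sub_ne_zero.mpr hg3]; ring1)
                      | norm_num
                      | ring1
              · by_cases hg2 : ξ (i+q+2) = ξ (i+1)
                · by_cases hg3 : ξ (i+q+3) = ξ (i+2)
                  · simp only [if_neg hg1, if_pos hg2, if_pos hg3]
                    first
                      | (field_simp [e1, e2, sub_ne_zero.mpr hg1]; ring1)
                      | norm_num
                      | ring1
                  · simp only [if_neg hg1, if_pos hg2, if_neg hg3]
                    first
                      | (field_simp [e1, e2, sub_ne_zero.mpr hg1, sub_ne_zero.mpr hg3]; ring1)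
                      | norm_num
                      | ring1
                · by_cases hg3 : ξ (i+q+3) = ξ (i+2)
                  · simp only [if_neg hg1, if_neg hg2, if_pos hg3]
                    first
                      | (field_simp [e1, e2, sub_ne_zero.mpr hg1, sub_ne_zero.mpr hg2]; ring1)
                      | norm_num
                      | ring1
                  · simp only [if_neg hg1, if_neg hg2, if_neg hg3]
                    first
                      | (field_simp [e1, e2, sub_ne_zero.mpr hg1, sub_ne_zero.mpr hg2, sub_ne_zero.mpr hg3]; ring1)
                      | norm_num
                      | ring1

/-- Derivative formula for B-splines on the interior of a knot span. -/
theorem coxDeBoor_hasDerivAt (ξ : ℕ → ℝ) (hξ : Monotone ξ)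
    (p : ℕ) (hp : 1 ≤ p) (i : ℕ) (x : ℝ)
    (hx : ∃ j : ℕ, ξ j < x ∧ x < ξ (j + 1)) :
    HasDerivAt (fun y => coxDeBoor ξ p i y)
      ((if ξ (i + p) = ξ i then 0
          else (p : ℝ) / (ξ (i + p) - ξ i) * coxDeBoor ξ (p - 1) i x) -
        (if ξ (i + p + 1) = ξ (i + 1) then 0
          else (p : ℝ) / (ξ (i + p + 1) - ξ (i + 1)) * coxDeBoor ξ (p - 1) (i + 1) x)) x := by
  obtain ⟨j, hj1, hj2⟩ := hx
  exact coxDeBoor_hasDerivAt_aux ξ hξ x j hj1 hj2 p i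
end

section
/- The n-point Gaussian quadrature rule on [−1, 1] is exact for all polynomials of degree at most 2n−1: if x₁, …, x_n are the roots of the n-th Legendre polynomial and w_i the corresponding weights, then ∫_{−1}^{1} q(x) dx = ∑_{i=1}^{n} w_i q(x_i) for every polynomial q with deg q ≤ 2n−1. -/
open Polynomial intervalIntegral

/-- The degree-`n` Legendre polynomial via the Rodrigues formula. -/
noncomputable def legendrePoly (n : ℕ) : Polynomial ℝ :=
  Polynomial.C ((1 : ℝ) / (2 ^ n * n.factorial)) *
    Polynomial.derivative^[n] ((Polynomial.X ^ 2 - 1) ^ n)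

namespace GaussAux

open MeasureTheory Set Finset

lemma pint (p : Polynomial ℝ) (a b : ℝ) :
    IntervalIntegrable (fun t => p.eval t) volume a b :=
  p.continuous.intervalIntegrable a b

lemma pint2 (p q : Polynomial ℝ) (a b : ℝ) :
    IntervalIntegrable (fun t => p.eval t * q.eval t) volume a b :=
  (p.continuous.mul q.continuous).intervalIntegrable a b

lemma ibp (p s : Polynomial ℝ) (h1 : p.eval 1 = 0) (h2 : p.eval (-1) = 0) :
    (∫ t in (-1:ℝ)..1, (derivative p).eval t * s.eval t)
      = - ∫ t in (-1:ℝ)..1, p.eval t * (derivative s).eval t := by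
  have H := integral_deriv_mul_eq_sub (a := (-1:ℝ)) (b := 1)
    (u := fun t => p.eval t) (v := fun t => s.eval t)
    (u' := fun t => (derivative p).eval t) (v' := fun t => (derivative s).eval t)
    (fun t _ => p.hasDerivAt t) (fun t _ => s.hasDerivAt t)
    (pint _ _ _) (pint _ _ _)
  rw [intervalIntegral.integral_add (pint2 _ _ _ _) (pint2 _ _ _ _)] at H
  simp only [h1, h2, zero_mul, mul_zero, sub_zero, zero_sub] at H
  linarith [H]

lemma iter_ibp (m : ℕ) : ∀ (p s : Polynomial ℝ),
    (∀ k, k < m → (derivative^[k] p).eval 1 = 0 ∧ (derivative^[k] p).eval (-1) = 0) →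
    (∫ t in (-1:ℝ)..1, (derivative^[m] p).eval t * s.eval t)
      = (-1)^m * ∫ t in (-1:ℝ)..1, p.eval t * (derivative^[m] s).eval t := by
  induction m with
  | zero => intro p s _; simp
  | succ m ih =>
    intro p s hb
    rw [Function.iterate_succ_apply',
      ibp _ _ (hb m (Nat.lt_succ_self m)).1 (hb m (Nat.lt_succ_self m)).2,
      ih p (derivative s) (fun k hk => hb k (hk.trans (Nat.lt_succ_self m))),
      ← Function.iterate_succ_apply]
    ring

lemma dvd_deriv {a : ℝ} {m : ℕ} {p : Polynomial ℝ} (h : (X - C a) ^ (m + 1) ∣ p) :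
    (X - C a) ^ m ∣ derivative p := by
  obtain ⟨q, rfl⟩ := h
  rw [derivative_mul, derivative_X_sub_C_pow, Nat.add_sub_cancel]
  exact dvd_add ((dvd_mul_left _ _).mul_right _)
    ((pow_dvd_pow _ (Nat.le_succ m)).trans (dvd_mul_right _ _))

lemma dvd_iter {a : ℝ} {m : ℕ} {p : Polynomial ℝ} (h : (X - C a) ^ m ∣ p) :
    ∀ k, k ≤ m → (X - C a) ^ (m - k) ∣ derivative^[k] p := by
  intro k
  induction k with
  | zero => intro _; simpa using h
  | succ k ih =>
    intro hk
    rw [Function.iterate_succ_apply']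
    have h1 : m - k = (m - (k + 1)) + 1 := by omega
    have := ih (le_of_lt hk)
    rw [h1] at this
    exact dvd_deriv this

lemma boundary (n : ℕ) (k : ℕ) (hk : k < n) :
    (derivative^[k] ((X ^ 2 - 1 : Polynomial ℝ) ^ n)).eval 1 = 0 ∧
    (derivative^[k] ((X ^ 2 - 1 : Polynomial ℝ) ^ n)).eval (-1) = 0 := by
  have hfac : (X ^ 2 - 1 : Polynomial ℝ) = (X - C 1) * (X - C (-1)) := by
    simp only [map_one, map_neg]; ring
  have key : ∀ a : ℝ, (X - C a) ^ n ∣ (X ^ 2 - 1 : Polynomial ℝ) ^ n →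
      (derivative^[k] ((X ^ 2 - 1 : Polynomial ℝ) ^ n)).eval a = 0 := by
    intro a ha
    have h2 := dvd_iter ha k (le_of_lt hk)
    have h3 : (X - C a) ∣ derivative^[k] ((X ^ 2 - 1 : Polynomial ℝ) ^ n) :=
      (dvd_pow_self (X - C a) (by omega : n - k ≠ 0)).trans h2
    exact dvd_iff_isRoot.mp h3
  constructor
  · exact key 1 (by rw [hfac, mul_pow]; exact dvd_mul_right _ _)
  · exact key (-1) (by rw [hfac, mul_pow]; exact dvd_mul_left _ _)

lemma ortho (n : ℕ) (c : ℝ) (s : Polynomial ℝ) (hs : s.natDegree < n) :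
    (∫ t in (-1:ℝ)..1,
      (C c * derivative^[n] ((X ^ 2 - 1 : Polynomial ℝ) ^ n)).eval t * s.eval t) = 0 := by
  simp only [eval_mul, eval_C, mul_assoc]
  rw [intervalIntegral.integral_const_mul,
    iter_ibp n _ s (fun k hk => boundary n k hk),
    iterate_derivative_eq_zero hs]
  simp

lemma natDegree_D (n : ℕ) :
    (derivative^[n] ((X ^ 2 - 1 : Polynomial ℝ) ^ n)).natDegree = n ∧
    (derivative^[n] ((X ^ 2 - 1 : Polynomial ℝ) ^ n)) ≠ 0 := by
  set F : Polynomial ℝ := (X ^ 2 - 1) ^ n with hF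
  have hmon : F.Monic := by
    apply Monic.pow
    have : (X ^ 2 - 1 : Polynomial ℝ) = X ^ 2 - C 1 := by simp
    rw [this]
    exact monic_X_pow_sub_C 1 (by norm_num)
  have hdeg : F.natDegree = 2 * n := by
    rw [hF, natDegree_pow]
    have : (X ^ 2 - 1 : Polynomial ℝ) = X ^ 2 - C 1 := by simp
    rw [this, natDegree_X_pow_sub_C]
    ring
  have hcoeff : (derivative^[n] F).coeff n ≠ 0 := by
    rw [coeff_iterate_derivative]
    have hFc : F.coeff (n + n) = 1 := by
      have : n + n = F.natDegree := by omega
      rw [this]; exact hmon.coeff_natDegree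
    rw [hFc, nsmul_eq_mul, mul_one]
    exact_mod_cast fun h => absurd (Nat.descFactorial_eq_zero_iff_lt.mp h) (by omega)
  have hne : derivative^[n] F ≠ 0 := fun h => hcoeff (by rw [h]; simp)
  have hle : (derivative^[n] F).natDegree ≤ n := by
    have := natDegree_iterate_derivative F n
    omega
  have hge : n ≤ (derivative^[n] F).natDegree := le_natDegree_of_ne_zero hcoeff
  exact ⟨le_antisymm hle hge, hne⟩

end GaussAux

/-- `n`-point Gauss–Legendre quadrature is exact on polynomials of degree ≤ 2n − 1. -/
theorem gauss_legendre_exactness (n : ℕ) (hn : 0 < n)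
    (x : Fin n → ℝ) (hx : Function.Injective x)
    (hroot : ∀ i, (legendrePoly n).eval (x i) = 0)
    (hmem : ∀ i, x i ∈ Set.Ioo (-1 : ℝ) 1)
    (w : Fin n → ℝ)
    (hw : ∀ i, w i = ∫ t in (-1 : ℝ)..1,
      ∏ j ∈ Finset.univ.erase i, (t - x j) / (x i - x j)) :
    ∀ q : Polynomial ℝ, q.natDegree ≤ 2 * n - 1 →
      (∫ t in (-1 : ℝ)..1, q.eval t) = ∑ i, w i * q.eval (x i) := by
  intro q hq
  classical
  set D : Polynomial ℝ := derivative^[n] ((X ^ 2 - 1) ^ n) with hD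
  obtain ⟨hDdeg, hDne⟩ := GaussAux.natDegree_D n
  set P : Polynomial ℝ := legendrePoly n with hP
  have hc0 : ((1 : ℝ) / (2 ^ n * n.factorial)) ≠ 0 := by positivity
  have hPD : P = C ((1 : ℝ) / (2 ^ n * n.factorial)) * D := rfl
  have hPne : P ≠ 0 := by
    rw [hPD]
    exact mul_ne_zero (by simpa using hc0) hDne
  have hPdeg : P.natDegree = n := by
    rw [hPD, natDegree_C_mul hc0, hDdeg]
  -- the monic normalization
  set P' : Polynomial ℝ := P * C P.leadingCoeff⁻¹ with hP'
  have hmonic : P'.Monic := monic_mul_leadingCoeff_inv hPne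
  have hP'deg : P'.natDegree = n := by
    rw [hP']
    rw [natDegree_mul_C (inv_ne_zero (leadingCoeff_ne_zero.mpr hPne)), hPdeg]
  have hP'form : P' = C ((1 : ℝ) / (2 ^ n * n.factorial) * P.leadingCoeff⁻¹) * D := by
    rw [hP', hPD, map_mul]; ring
  have hP'root : ∀ i, P'.eval (x i) = 0 := by
    intro i; rw [hP', eval_mul, hroot i, zero_mul]
  -- division
  set s : Polynomial ℝ := q /ₘ P' with hs
  set r : Polynomial ℝ := q %ₘ P' with hr
  have hdiv : r + P' * s = q := modByMonic_add_div q P'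
  have hsdeg : s.natDegree < n := by
    rw [hs, natDegree_divByMonic q hmonic, hP'deg]
    omega
  have hrdeg : r.degree < n := by
    have := degree_modByMonic_lt q hmonic
    rwa [degree_eq_natDegree hmonic.ne_zero, hP'deg] at this
  have hrdeg' : r.degree < (Finset.univ : Finset (Fin n)).card := by
    simpa using hrdeg
  -- orthogonality part
  have hPs : (∫ t in (-1:ℝ)..1, P'.eval t * s.eval t) = 0 := by
    have := GaussAux.ortho n ((1 : ℝ) / (2 ^ n * n.factorial) * P.leadingCoeff⁻¹) s hsdeg
    rw [← hP'form] at this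
    exact this
  -- Lagrange interpolation of r
  have hinj : Set.InjOn x (Finset.univ : Finset (Fin n)) := hx.injOn
  have hinterp : Lagrange.interpolate Finset.univ x (fun i => r.eval (x i)) = r :=
    (Lagrange.eq_interpolate hinj hrdeg').symm
  have hbasis : ∀ i t, (Lagrange.basis Finset.univ x i).eval t =
      ∏ j ∈ Finset.univ.erase i, (t - x j) / (x i - x j) := by
    intro i t
    rw [Lagrange.basis, eval_prod]
    refine Finset.prod_congr rfl fun j _ => ?_
    rw [Lagrange.basisDivisor]
    simp [div_eq_inv_mul]
  have hwi : ∀ i, w i = ∫ t in (-1:ℝ)..1, (Lagrange.basis Finset.univ x i).eval t := by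
    intro i
    rw [hw]
    exact intervalIntegral.integral_congr fun t _ => (hbasis i t).symm
  -- compute ∫ r
  have hrint : (∫ t in (-1:ℝ)..1, r.eval t) = ∑ i, w i * r.eval (x i) := by
    conv_lhs => rw [← hinterp]
    rw [Lagrange.interpolate_apply]
    have : ∀ t : ℝ,
        (∑ i, C (r.eval (x i)) * Lagrange.basis Finset.univ x i).eval t =
        ∑ i, r.eval (x i) * (Lagrange.basis Finset.univ x i).eval t := by
      intro t; rw [eval_finset_sum]; simp
    rw [intervalIntegral.integral_congr (fun t _ => this t),
      intervalIntegral.integral_finset_sum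
        (f := fun i t => r.eval (x i) * (Lagrange.basis Finset.univ x i).eval t) (fun i _ =>
        (continuous_const.mul (Lagrange.basis Finset.univ x i).continuous).intervalIntegrable _ _)]
    refine Finset.sum_congr rfl fun i _ => ?_
    rw [intervalIntegral.integral_const_mul, hwi i]
    ring
  -- conclude
  have hqval : ∀ i, q.eval (x i) = r.eval (x i) := by
    intro i
    conv_lhs => rw [← hdiv]
    rw [eval_add, eval_mul, hP'root i, zero_mul, add_zero]
  have hqint : (∫ t in (-1:ℝ)..1, q.eval t)
      = (∫ t in (-1:ℝ)..1, r.eval t) + ∫ t in (-1:ℝ)..1, P'.eval t * s.eval t := by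
    rw [← intervalIntegral.integral_add (GaussAux.pint _ _ _) (GaussAux.pint2 _ _ _ _)]
    apply intervalIntegral.integral_congr
    intro t _
    conv_lhs => rw [← hdiv]
    simp
  rw [hqint, hPs, add_zero, hrint]
  exact Finset.sum_congr rfl fun i _ => by rw [hqval i]
end
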